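/- Let A be a p×p real symmetric matrix and ε ∈ ℝ. Write the spectral decomposition A = ∑_{i=1}^{p} d_i·u_i u_iᵀ, where u_1,…,u_p is an orthonormal basis of ℝ^p consisting of eigenvectors of A with corresponding real eigenvalues d_1,…,d_p. Define S* = ∑_{i=1}^{p} max(d_i, ε)·u_i u_iᵀ. Then S* is symmetric, S* − ε·I_p is positive semidefinite, and for every p×p real symmetric matrix S with S − ε·I_p positive semidefinite, ‖S* − A‖_F ≤ ‖S − A‖_F; that is, S* is a Frobenius-norm projection of A onto the set {S symmetric : S − ε·I_p PSD}. -/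

import Mathlib

open Matrix

/-- Frobenius norm of a real `p × p` matrix. -/
noncomputable def frob {p : ℕ} (A : Matrix (Fin p) (Fin p) ℝ) : ℝ :=
  Real.sqrt (∑ u, ∑ v, (A u v) ^ 2)

variable {p : ℕ}

-- sum of matrices mulVec
lemma sum_mulVec' {ι : Type*} (s : Finset ι) (M : ι → Matrix (Fin p) (Fin p) ℝ) (x : Fin p → ℝ) :
    (∑ i ∈ s, M i) *ᵥ x = ∑ i ∈ s, (M i) *ᵥ x := by
  ext k
  simp [Matrix.mulVec, dotProduct, Matrix.sum_apply, Finset.sum_mul, Finset.sum_apply]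
  exact Finset.sum_comm


lemma dotProduct_sum' {ι : Type*} (s : Finset ι) (x : Fin p → ℝ) (w : ι → Fin p → ℝ) :
    x ⬝ᵥ (∑ i ∈ s, w i) = ∑ i ∈ s, x ⬝ᵥ w i := by
  simp [dotProduct, Finset.sum_apply, Finset.mul_sum]
  exact Finset.sum_comm

lemma vecMulVec_mulVec' (a x : Fin p → ℝ) :
    (Matrix.vecMulVec a a) *ᵥ x = (a ⬝ᵥ x) • a := by
  ext k
  simp [Matrix.mulVec, dotProduct, Matrix.vecMulVec_apply, Finset.mul_sum, mul_assoc,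
    mul_comm, mul_left_comm]

lemma frobsq_trace (M : Matrix (Fin p) (Fin p) ℝ) :
    (∑ a, ∑ b, M a b ^ 2) = Matrix.trace (Mᵀ * M) := by
  simp [Matrix.trace, Matrix.mul_apply, Matrix.diag, sq]
  exact Finset.sum_comm

section
variable (u : Fin p → (Fin p → ℝ))

lemma hUUt (horth : ∀ i j : Fin p, u i ⬝ᵥ u j = if i = j then (1 : ℝ) else 0) :
    (Matrix.of u) * (Matrix.of u)ᵀ = 1 := by
  ext i j
  have h := horth i j
  simp only [dotProduct] at h
  simp [Matrix.mul_apply, Matrix.one_apply, h]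

lemma sum_vvT (horth : ∀ i j : Fin p, u i ⬝ᵥ u j = if i = j then (1 : ℝ) else 0) :
    ∑ i, Matrix.vecMulVec (u i) (u i) = (1 : Matrix (Fin p) (Fin p) ℝ) := by
  have h2 : (Matrix.of u)ᵀ * (Matrix.of u) = 1 := mul_eq_one_comm.mp (hUUt u horth)
  ext a b
  have h := congrFun (congrFun h2 a) b
  simp [Matrix.mul_apply] at h
  simpa [Matrix.sum_apply, Matrix.vecMulVec_apply] using h

lemma conj_entry (M : Matrix (Fin p) (Fin p) ℝ) (i j : Fin p) :
    ((Matrix.of u) * M * (Matrix.of u)ᵀ) i j = u i ⬝ᵥ (M *ᵥ u j) := by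
  simp only [Matrix.mul_apply, Matrix.transpose_apply, Matrix.of_apply, dotProduct,
    Matrix.mulVec, Finset.sum_mul, Finset.mul_sum]
  rw [Finset.sum_comm]
  exact Finset.sum_congr rfl fun a _ => Finset.sum_congr rfl fun b _ => by ring

lemma frobsq_conj (horth : ∀ i j : Fin p, u i ⬝ᵥ u j = if i = j then (1 : ℝ) else 0)
    (M : Matrix (Fin p) (Fin p) ℝ) :
    (∑ a, ∑ b, M a b ^ 2) = ∑ i, ∑ j, (u i ⬝ᵥ (M *ᵥ u j)) ^ 2 := by
  have key : (∑ a, ∑ b, M a b ^ 2)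
      = ∑ i, ∑ j, (((Matrix.of u) * M * (Matrix.of u)ᵀ) i j) ^ 2 := by
    rw [frobsq_trace, frobsq_trace]
    set U := Matrix.of u with hU
    have h2 : Uᵀ * U = 1 := mul_eq_one_comm.mp (hUUt u horth)
    have hmain : (U * M * Uᵀ)ᵀ * (U * M * Uᵀ) = U * (Mᵀ * M) * Uᵀ := by
      rw [Matrix.transpose_mul, Matrix.transpose_mul, Matrix.transpose_transpose]
      simp only [Matrix.mul_assoc]
      rw [← Matrix.mul_assoc Uᵀ U, h2, Matrix.one_mul]
    rw [hmain, Matrix.trace_mul_cycle, ← Matrix.mul_assoc, h2, Matrix.one_mul]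
  rw [key]
  exact Finset.sum_congr rfl fun i _ => Finset.sum_congr rfl fun j _ => by rw [conj_entry]

end


/-- eigenvalue thresholding gives a Frobenius-norm projection onto
`{S symmetric : S − ε•I PSD}`. Given the spectral decomposition
`A = ∑ dᵢ • uᵢuᵢᵀ` of a symmetric matrix `A` with an orthonormal eigenbasis `u`,
the matrix `S* = ∑ max(dᵢ, ε) • uᵢuᵢᵀ` is symmetric, satisfies `S* − ε•I ⪰ 0`,
and minimizes `‖S − A‖_F` over all feasible `S`. -/
theorem stmt16 (p : ℕ) (hp : 1 ≤ p) (ε : ℝ)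
    (A : Matrix (Fin p) (Fin p) ℝ) (hA : A.IsSymm)
    (u : Fin p → (Fin p → ℝ)) (d : Fin p → ℝ)
    (horth : ∀ i j : Fin p, u i ⬝ᵥ u j = if i = j then (1 : ℝ) else 0)
    (heig : ∀ i : Fin p, A.mulVec (u i) = d i • u i)
    (hdecomp : A = ∑ i, d i • Matrix.vecMulVec (u i) (u i)) :
    (∑ i, max (d i) ε • Matrix.vecMulVec (u i) (u i)).IsSymm ∧
    ((∑ i, max (d i) ε • Matrix.vecMulVec (u i) (u i)) - ε • 1).PosSemidef ∧
    (∀ S : Matrix (Fin p) (Fin p) ℝ, S.IsSymm → (S - ε • 1).PosSemidef →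
      frob ((∑ i, max (d i) ε • Matrix.vecMulVec (u i) (u i)) - A)
        ≤ frob (S - A)) := by
  set c : Fin p → ℝ := fun i => max (d i) ε with hc
  set T : Matrix (Fin p) (Fin p) ℝ := ∑ i, c i • Matrix.vecMulVec (u i) (u i) with hT
  -- T *ᵥ u j = c j • u j
  have hTmul : ∀ j, T *ᵥ u j = c j • u j := by
    intro j
    rw [hT, sum_mulVec']
    have hterm : ∀ i, (c i • Matrix.vecMulVec (u i) (u i)) *ᵥ u j
        = (if i = j then c i else 0) • u i := by
      intro i
      rw [Matrix.smul_mulVec, vecMulVec_mulVec', horth i j]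
      by_cases h : i = j <;> simp [h, smul_smul]
    rw [Finset.sum_congr rfl fun i _ => hterm i]
    simp
  -- symmetry
  have hTsymm : T.IsSymm := by
    rw [Matrix.IsSymm]
    ext a b
    simp [hT, Matrix.sum_apply, Matrix.vecMulVec_apply, Matrix.transpose_apply, mul_comm,
      mul_left_comm]
  refine ⟨hTsymm, ?_, ?_⟩
  · -- PSD
    have hrw : T - ε • 1 = ∑ i, (c i - ε) • Matrix.vecMulVec (u i) (u i) := by
      rw [hT, ← sum_vvT u horth, Finset.smul_sum, ← Finset.sum_sub_distrib]
      exact Finset.sum_congr rfl fun i _ => by rw [sub_smul]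
    refine Matrix.PosSemidef.of_dotProduct_mulVec_nonneg ?_ ?_
    · show _ᴴ = _
      rw [Matrix.conjTranspose_eq_transpose_of_trivial]
      rw [hrw, show (∑ i, (c i - ε) • Matrix.vecMulVec (u i) (u i))ᵀ = _ from rfl]
      ext a b
      simp [Matrix.sum_apply, Matrix.vecMulVec_apply, mul_comm, mul_left_comm]
    · intro x
      have : (T - ε • 1) *ᵥ x = ∑ i, ((c i - ε) * (u i ⬝ᵥ x)) • u i := by
        rw [hrw, sum_mulVec']
        exact Finset.sum_congr rfl fun i _ => by
          rw [Matrix.smul_mulVec, vecMulVec_mulVec', smul_smul]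
      rw [this, show star x = x from rfl, dotProduct_sum']
      refine Finset.sum_nonneg fun i _ => ?_
      rw [dotProduct_smul, smul_eq_mul, dotProduct_comm, mul_assoc]
      refine mul_nonneg ?_ (mul_self_nonneg _)
      simp [hc, sub_nonneg, le_max_right]
  · intro S hSsym hSpsd
    unfold frob
    apply Real.sqrt_le_sqrt
    have e1 := frobsq_conj u horth (T - A)
    have e2 := frobsq_conj u horth (S - A)
    have hTA : ∀ i j : Fin p, u i ⬝ᵥ ((T - A) *ᵥ u j) = if i = j then c j - d j else 0 := by
      intro i j
      rw [Matrix.sub_mulVec, hTmul, heig, dotProduct_sub, dotProduct_smul,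
        dotProduct_smul, horth]
      by_cases h : i = j <;> simp [h]
    have hL : ∑ i, ∑ j, (u i ⬝ᵥ ((T - A) *ᵥ u j)) ^ 2 = ∑ i, (c i - d i) ^ 2 := by
      refine Finset.sum_congr rfl fun i _ => ?_
      have hsq : ∀ j, (if i = j then c j - d j else 0) ^ 2
          = if i = j then (c j - d j) ^ 2 else 0 := fun j => by split <;> simp
      simp [hTA, hsq]
    have hdiag : ∀ i : Fin p, (c i - d i) ^ 2 ≤ (u i ⬝ᵥ ((S - A) *ᵥ u i)) ^ 2 := by
      intro i
      have hSA : u i ⬝ᵥ ((S - A) *ᵥ u i) = u i ⬝ᵥ (S *ᵥ u i) - d i := by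
        rw [Matrix.sub_mulVec, heig, dotProduct_sub, dotProduct_smul, horth]
        simp
      have hB : ε ≤ u i ⬝ᵥ (S *ᵥ u i) := by
        have h0 := hSpsd.dotProduct_mulVec_nonneg (u i)
        rw [show star (u i) = u i from rfl, Matrix.sub_mulVec, Matrix.smul_mulVec,
          Matrix.one_mulVec, dotProduct_sub, dotProduct_smul, horth] at h0
        simp at h0
        linarith
      rw [hSA]
      rcases le_total ε (d i) with h | h
      · have : c i = d i := max_eq_left h
        simpa [this] using sq_nonneg (u i ⬝ᵥ (S *ᵥ u i) - d i)
      · have hce : c i = ε := max_eq_right h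
        rw [hce]
        have h1 : (0:ℝ) ≤ ε - d i := by linarith
        have h2 : ε - d i ≤ u i ⬝ᵥ (S *ᵥ u i) - d i := by linarith
        exact pow_le_pow_left₀ h1 h2 2
    have main : ∑ i, (c i - d i) ^ 2 ≤ ∑ i, ∑ j, (u i ⬝ᵥ ((S - A) *ᵥ u j)) ^ 2 :=
      le_trans (Finset.sum_le_sum fun i _ => hdiag i)
        (Finset.sum_le_sum fun i _ =>
          Finset.single_le_sum (f := fun j => (u i ⬝ᵥ ((S - A) *ᵥ u j)) ^ 2)
            (fun j _ => sq_nonneg _) (Finset.mem_univ i))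
    linarith [e1, e2, main, hL]
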